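/- For real x with 0 < |x| < 1, ∫₀^π θ sin⁵θ / (1 − x² cos² θ) dθ = (π/x⁴) · ((5/3)x² − 1 + ((x² − 1)²/x) · artanh(x)). -/

import Mathlib

open Real intervalIntegral

theorem stmt_8 (x : ℝ) (hx : |x| < 1) (hx0 : x ≠ 0) :
    ∫ θ in (0:ℝ)..Real.pi, θ * Real.sin θ ^ 5 / (1 - x ^ 2 * Real.cos θ ^ 2)
      = Real.pi / x ^ 4 *
        (5 / 3 * x ^ 2 - 1 +
          (x ^ 2 - 1) ^ 2 / x * (1 / 2 * Real.log ((1 + x) / (1 - x)))) := by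
  have hx1 : -1 < x ∧ x < 1 := abs_lt.mp hx
  have hx2 : x ^ 2 < 1 := by nlinarith [hx1.1, hx1.2]
  have hx2pos : (0:ℝ) < x ^ 2 := by positivity
  have hden : ∀ θ : ℝ, 0 < 1 - x ^ 2 * Real.cos θ ^ 2 := by
    intro θ
    nlinarith [Real.cos_sq_le_one θ, sq_nonneg (Real.cos θ)]
  set g : ℝ → ℝ := fun θ => Real.sin θ ^ 5 / (1 - x ^ 2 * Real.cos θ ^ 2) with hgdef
  have hgc : Continuous g := by
    apply Continuous.div (by continuity) (by continuity)
    intro θ; exact (hden θ).ne'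
  -- abbreviations
  set c₁ : ℝ := (2 * x ^ 2 - 1) / x ^ 4 with hc1
  set c₂ : ℝ := (1 - x ^ 2) ^ 2 / (2 * x ^ 5) with hc2
  set G : ℝ → ℝ := fun θ => Real.cos θ ^ 3 / (3 * x ^ 2) - c₁ * Real.cos θ
      - c₂ * (Real.log (1 + x * Real.cos θ) - Real.log (1 - x * Real.cos θ)) with hGdef
  have habs : ∀ θ : ℝ, |x * Real.cos θ| < 1 := by
    intro θ
    calc |x * Real.cos θ| = |x| * |Real.cos θ| := abs_mul _ _
      _ ≤ |x| * 1 := by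
          have := Real.abs_cos_le_one θ
          nlinarith [abs_nonneg x]
      _ < 1 := by simpa using hx
  have hderiv : ∀ θ : ℝ, HasDerivAt G (g θ) θ := by
    intro θ
    have hc := Real.hasDerivAt_cos θ
    have hb := abs_lt.mp (habs θ)
    have hp1 : (0:ℝ) < 1 + x * Real.cos θ := by linarith [hb.1]
    have hp2 : (0:ℝ) < 1 - x * Real.cos θ := by linarith [hb.2]
    have h1 : HasDerivAt (fun θ => Real.cos θ ^ 3 / (3 * x ^ 2))
        ((3 * Real.cos θ ^ 2 * (-Real.sin θ)) / (3 * x ^ 2)) θ := (hc.pow 3).div_const _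
    have h2 : HasDerivAt (fun θ => c₁ * Real.cos θ) (c₁ * (-Real.sin θ)) θ := hc.const_mul c₁
    have hin1 : HasDerivAt (fun θ => 1 + x * Real.cos θ) (x * (-Real.sin θ)) θ :=
      (hc.const_mul x).const_add 1
    have hin2 : HasDerivAt (fun θ => 1 - x * Real.cos θ) (-(x * (-Real.sin θ))) θ :=
      (hc.const_mul x).const_sub 1
    have hl1 : HasDerivAt (fun θ => Real.log (1 + x * Real.cos θ))
        (x * (-Real.sin θ) / (1 + x * Real.cos θ)) θ := hin1.log hp1.ne'
    have hl2 : HasDerivAt (fun θ => Real.log (1 - x * Real.cos θ))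
        (-(x * (-Real.sin θ)) / (1 - x * Real.cos θ)) θ := hin2.log hp2.ne'
    have h3 : HasDerivAt (fun θ => c₂ * (Real.log (1 + x * Real.cos θ)
        - Real.log (1 - x * Real.cos θ)))
        (c₂ * (x * (-Real.sin θ) / (1 + x * Real.cos θ)
          - -(x * (-Real.sin θ)) / (1 - x * Real.cos θ))) θ := (hl1.sub hl2).const_mul c₂
    have H := (h1.sub h2).sub h3
    convert H using 1
    case e'_4 => rfl
    case e'_5 => rfl
    case e'_8 => rfl
    have hs : Real.sin θ ^ 2 = 1 - Real.cos θ ^ 2 := by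
      nlinarith [Real.sin_sq_add_cos_sq θ]
    have hs5 : Real.sin θ ^ 5 = Real.sin θ * (1 - Real.cos θ ^ 2) ^ 2 := by
      rw [← hs]; ring
    have hdne : (1 - x ^ 2 * Real.cos θ ^ 2) ≠ 0 := (hden θ).ne'
    rw [hgdef]
    simp only
    rw [hs5, hc1, hc2]
    have hfac : 1 - x ^ 2 * Real.cos θ ^ 2 = (1 + x * Real.cos θ) * (1 - x * Real.cos θ) := by ring
    rw [hfac]
    have hq1 : 1 + Real.cos θ * x ≠ 0 := by rw [mul_comm]; exact hp1.ne'
    have hq2 : 1 - Real.cos θ * x ≠ 0 := by rw [mul_comm]; exact hp2.ne'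
    field_simp
    ring
  have hJ : ∫ θ in (0:ℝ)..Real.pi, g θ = G Real.pi - G 0 :=
    intervalIntegral.integral_eq_sub_of_hasDerivAt (fun θ _ => hderiv θ)
      (hgc.intervalIntegrable _ _)
  -- symmetry step
  have hsym : ∫ θ in (0:ℝ)..Real.pi, θ * g θ
      = ∫ θ in (0:ℝ)..Real.pi, (Real.pi - θ) * g θ := by
    have h := intervalIntegral.integral_comp_sub_left (a := 0) (b := Real.pi)
      (fun t => t * g t) Real.pi
    simp only [sub_self, sub_zero] at h
    rw [← h]
    apply intervalIntegral.integral_congr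
    intro θ _
    simp only [hgdef]
    rw [Real.sin_pi_sub, Real.cos_pi_sub]
    ring
  have hint1 : IntervalIntegrable (fun θ => θ * g θ) MeasureTheory.volume 0 Real.pi :=
    (continuous_id.mul hgc).intervalIntegrable _ _
  have hint2 : IntervalIntegrable (fun θ => Real.pi * g θ) MeasureTheory.volume 0 Real.pi :=
    (continuous_const.mul hgc).intervalIntegrable _ _
  have hsplit : ∫ θ in (0:ℝ)..Real.pi, (Real.pi - θ) * g θ
      = (∫ θ in (0:ℝ)..Real.pi, Real.pi * g θ) - ∫ θ in (0:ℝ)..Real.pi, θ * g θ := by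
    rw [← intervalIntegral.integral_sub hint2 hint1]
    apply intervalIntegral.integral_congr
    intro θ _; ring
  have hmul : ∫ θ in (0:ℝ)..Real.pi, Real.pi * g θ
      = Real.pi * ∫ θ in (0:ℝ)..Real.pi, g θ := intervalIntegral.integral_const_mul _ _
  have hI : ∫ θ in (0:ℝ)..Real.pi, θ * g θ
      = Real.pi / 2 * (G Real.pi - G 0) := by
    have : (2:ℝ) * ∫ θ in (0:ℝ)..Real.pi, θ * g θ = Real.pi * (G Real.pi - G 0) := by
      rw [← hJ, ← hmul]
      nlinarith [hsym, hsplit]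
    linear_combination this / 2
  have hstep : ∫ θ in (0:ℝ)..Real.pi, θ * Real.sin θ ^ 5 / (1 - x ^ 2 * Real.cos θ ^ 2)
      = ∫ θ in (0:ℝ)..Real.pi, θ * g θ := by
    apply intervalIntegral.integral_congr
    intro θ _
    simp only [hgdef]
    ring
  rw [hstep, hI]
  -- now pure algebra
  have hlog : Real.log ((1 + x) / (1 - x)) = Real.log (1 + x) - Real.log (1 - x) :=
    Real.log_div (by linarith [hx1.1]) (by intro h; nlinarith [hx1.2])
  rw [hlog, hGdef]
  simp only [Real.cos_pi, Real.cos_zero]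
  rw [hc1, hc2]
  have h1x : (1:ℝ) + x * (-1) = 1 - x := by ring
  have h2x : (1:ℝ) - x * (-1) = 1 + x := by ring
  have h3x : (1:ℝ) + x * 1 = 1 + x := by ring
  have h4x : (1:ℝ) - x * 1 = 1 - x := by ring
  rw [h1x, h2x, h3x, h4x]
  field_simp
  ring
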